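/- Let A be a unital C*-algebra of real rank zero, let X and Y be unital Banach right A-modules, and let T : X → Y be a continuous linear map such that for every x ∈ X the value T(x) lies in the norm-closure of the set {Φ(x) : Φ ∈ Hom_A(X,Y)}. Then T ∈ Hom_A(X,Y); in particular, the space Hom_A(X,Y) is a reflexive subspace of B(X,Y). -/

import Mathlib

/-- A contractive Banach right module over a (possibly non-unital) C*-algebra `A`:
the action `(x, a) ↦ x·a` is a continuous bilinear map `X × A → X` satisfying
`(x·a)·b = x·(a*b)` and `‖x·a‖ ≤ ‖x‖·‖a‖`. -/
structure BanachRightModule (A X : Type*) [NonUnitalCStarAlgebra A]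
    [NormedAddCommGroup X] [NormedSpace ℂ X] where
  act : X →L[ℂ] A →L[ℂ] X
  act_mul : ∀ (x : X) (a b : A), act (act x a) b = act x (a * b)
  norm_act_le : ∀ (x : X) (a : A), ‖act x a‖ ≤ ‖x‖ * ‖a‖

section Defs

variable {A X Y : Type*} [NonUnitalCStarAlgebra A]
  [NormedAddCommGroup X] [NormedSpace ℂ X]
  [NormedAddCommGroup Y] [NormedSpace ℂ Y]

/-- A projection in a C*-algebra: a self-adjoint idempotent. -/
def IsProjection {A : Type*} [NonUnitalCStarAlgebra A] (e : A) : Prop :=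
  IsSelfAdjoint e ∧ IsIdempotentElem e

/-- The operator `aTb : x ↦ T(x·a)·b`. -/
noncomputable def sandwich (ρX : BanachRightModule A X) (ρY : BanachRightModule A Y)
    (T : X →L[ℂ] Y) (a b : A) : X →L[ℂ] Y :=
  ((ρY.act.flip b).comp T).comp (ρX.act.flip a)

/-- The set of continuous right `A`-module homomorphisms from `X` to `Y`. -/
def homSet (ρX : BanachRightModule A X) (ρY : BanachRightModule A Y) :
    Set (X →L[ℂ] Y) :=
  {Φ | ∀ (x : X) (a : A), Φ (ρX.act x a) = ρY.act (Φ x) a}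

/-- `β(T) = sup{‖eTf‖ : e, f ∈ A projections with ef = 0}`. -/
noncomputable def betaConst (ρX : BanachRightModule A X) (ρY : BanachRightModule A Y)
    (T : X →L[ℂ] Y) : ℝ :=
  sSup {r : ℝ | ∃ e f : A, IsProjection e ∧ IsProjection f ∧ e * f = 0 ∧
    r = ‖sandwich ρX ρY T e f‖}

/-- `γ(T) = sup{‖aTb‖ : a, b ∈ A positive contractions with ab = 0}`. -/
noncomputable def gammaConst [PartialOrder A] [StarOrderedRing A]
    (ρX : BanachRightModule A X) (ρY : BanachRightModule A Y)
    (T : X →L[ℂ] Y) : ℝ :=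
  sSup {r : ℝ | ∃ a b : A, 0 ≤ a ∧ 0 ≤ b ∧ ‖a‖ ≤ 1 ∧ ‖b‖ ≤ 1 ∧ a * b = 0 ∧
    r = ‖sandwich ρX ρY T a b‖}

/-- `δ(T) = sup_{‖x‖ ≤ 1} inf{‖T(x) − Φ(x)‖ : Φ ∈ Hom_A(X,Y)}`. -/
noncomputable def deltaConst (ρX : BanachRightModule A X) (ρY : BanachRightModule A Y)
    (T : X →L[ℂ] Y) : ℝ :=
  sSup {r : ℝ | ∃ x : X, ‖x‖ ≤ 1 ∧
    r = Metric.infDist (T x) ((fun Φ : X →L[ℂ] Y => Φ x) '' homSet ρX ρY)}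

/-- `‖ad(T)‖ = sup{‖aT − Ta‖ : a ∈ A, ‖a‖ ≤ 1}`, where `(aT)(x) = T(x·a)` and
`(Ta)(x) = T(x)·a`. -/
noncomputable def adNorm (ρX : BanachRightModule A X) (ρY : BanachRightModule A Y)
    (T : X →L[ℂ] Y) : ℝ :=
  sSup {r : ℝ | ∃ a : A, ‖a‖ ≤ 1 ∧
    r = ‖T.comp (ρX.act.flip a) - (ρY.act.flip a).comp T‖}

/-- The module `X` is essential: the linear span of `{x·a : x ∈ X, a ∈ A}` is dense. -/
def Essential (ρX : BanachRightModule A X) : Prop :=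
  Dense (Submodule.span ℂ {z : X | ∃ (x : X) (a : A), z = ρX.act x a} : Set X)

end Defs


lemma fin_spec_mem_span_proj {A : Type*} [CStarAlgebra A]
    {a : A} (ha : IsSelfAdjoint a) (hfin : (spectrum ℂ a).Finite) :
    a ∈ Submodule.span ℂ {e : A | IsProjection e} := by
  classical
  have hfinR : (spectrum ℝ a).Finite := by
    rw [← spectrum.preimage_algebraMap ℂ]
    exact hfin.preimage ((algebraMap ℝ ℂ).injective.injOn)
  set s := hfinR.toFinset with hs
  set f : ℝ → ℝ → ℝ := fun lam => Set.indicator {lam} 1 with hf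
  have hcont : ∀ g : ℝ → ℝ, ContinuousOn g (spectrum ℝ a) := fun g => hfinR.continuousOn g
  have hproj : ∀ lam : ℝ, IsProjection (cfc (f lam) a) := by
    intro lam
    refine ⟨cfc_predicate _ a, ?_⟩
    have hid : (fun x => f lam x * f lam x) = f lam := by
      funext x
      by_cases hx : x ∈ ({lam} : Set ℝ) <;> simp [hf, Set.indicator_apply, hx, Pi.single_apply]
    unfold IsIdempotentElem
    rw [← cfc_mul _ _ a (hcont _) (hcont _), hid]
  set g : ℝ → ℝ → ℝ := fun lam x => lam * f lam x with hg
  have key : a = ∑ lam ∈ s, lam • cfc (f lam) a := by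
    have hEq : (spectrum ℝ a).EqOn (id : ℝ → ℝ) (∑ lam ∈ s, g lam) := by
      intro x hx
      have hxs : x ∈ s := by simpa [hs] using hx
      simp only [Finset.sum_apply, id_eq]
      rw [Finset.sum_eq_single_of_mem x hxs]
      · simp [hg, hf, Set.indicator_apply]
      · intro lam _ hne
        simp [hg, hf, Set.indicator_apply, (Ne.symm hne)]
    conv_lhs => rw [← cfc_id ℝ a ha, cfc_congr hEq,
      cfc_sum _ a s (fun i _ => hcont _)]
    exact Finset.sum_congr rfl fun lam _ => cfc_const_mul lam (f lam) a (hcont _)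
  rw [key]
  refine Submodule.sum_mem _ fun lam _ => ?_
  rw [← Complex.coe_smul]
  exact Submodule.smul_mem _ _ (Submodule.subset_span (hproj lam))

/-- Let `A` be a unital C*-algebra of real rank zero, `X` and `Y`
unital Banach right `A`-modules, and let `T : X → Y` be a continuous linear map
such that `T(x)` lies in the norm-closure of `{Φ(x) : Φ ∈ Hom_A(X,Y)}` for every
`x`.  Then `T ∈ Hom_A(X,Y)`; in particular, `Hom_A(X,Y)` is a reflexive subspace
of `B(X,Y)`. -/
theorem stmt19 {A X Y : Type*} [CStarAlgebra A]
    [NormedAddCommGroup X] [NormedSpace ℂ X] [CompleteSpace X]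
    [NormedAddCommGroup Y] [NormedSpace ℂ Y] [CompleteSpace Y]
    (hRR0 : ∀ a : A, IsSelfAdjoint a →
      a ∈ closure {b : A | IsSelfAdjoint b ∧ (spectrum ℂ b).Finite})
    (ρX : BanachRightModule A X) (ρY : BanachRightModule A Y)
    (hX1 : ∀ x : X, ρX.act x 1 = x) (hY1 : ∀ y : Y, ρY.act y 1 = y)
    (T : X →L[ℂ] Y)
    (h : ∀ x : X, T x ∈ closure ((fun Φ : X →L[ℂ] Y => Φ x) '' homSet ρX ρY)) :
    T ∈ homSet ρX ρY := by
  -- Step 1: sandwich vanishing from pointwise approximability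
  have key0 : ∀ (a b : A), a * b = 0 → ∀ x : X, ρY.act (T (ρX.act x a)) b = 0 := by
    intro a b hab x
    have hmem := h (ρX.act x a)
    rw [Metric.mem_closure_iff] at hmem
    have hbound : ∀ ε > (0:ℝ), ‖ρY.act (T (ρX.act x a)) b‖ ≤ ε * ‖b‖ := by
      intro ε hε
      obtain ⟨y, hy, hdist⟩ := hmem ε hε
      obtain ⟨Φ, hΦ, rfl⟩ := hy
      have h1 : ρY.act (Φ (ρX.act x a)) b = 0 := by
        rw [hΦ x a, ρY.act_mul, hab, map_zero]
      have h2 : ρY.act (T (ρX.act x a)) b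
          = ρY.act (T (ρX.act x a) - Φ (ρX.act x a)) b := by
        rw [map_sub, ContinuousLinearMap.sub_apply, h1, sub_zero]
      rw [h2]
      calc ‖ρY.act (T (ρX.act x a) - Φ (ρX.act x a)) b‖
          ≤ ‖T (ρX.act x a) - Φ (ρX.act x a)‖ * ‖b‖ := ρY.norm_act_le _ _
        _ ≤ ε * ‖b‖ := by
            apply mul_le_mul_of_nonneg_right _ (norm_nonneg b)
            rw [← dist_eq_norm]
            exact hdist.le
    have hnn : ‖ρY.act (T (ρX.act x a)) b‖ ≤ 0 := by
      by_contra hlt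
      push_neg at hlt
      have hb1 : (0:ℝ) < ‖b‖ + 1 := by positivity
      have hb2 : (0:ℝ) < 2 * (‖b‖ + 1) := by positivity
      have hB := hbound (‖ρY.act (T (ρX.act x a)) b‖ / (2 * (‖b‖ + 1))) (by positivity)
      rw [div_mul_eq_mul_div, le_div_iff₀ hb2] at hB
      nlinarith [norm_nonneg b]
    simpa using norm_le_zero_iff.mp hnn
  -- Step 2: projections act compatibly
  have keyP : ∀ e : A, IsProjection e → ∀ x : X,
      T (ρX.act x e) = ρY.act (T x) e := by
    intro e he x
    have h1 : e * (1 - e) = 0 := by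
      rw [mul_sub, mul_one, he.2, sub_self]
    have h2 : (1 - e) * e = 0 := by
      rw [sub_mul, one_mul, he.2, sub_self]
    have e1 := key0 e (1 - e) h1 x
    have e2 := key0 (1 - e) e h2 x
    rw [map_sub, hY1, sub_eq_zero] at e1
    rw [map_sub, hX1, map_sub T, map_sub, ContinuousLinearMap.sub_apply,
      sub_eq_zero] at e2
    exact e1.trans e2.symm
  -- Step 3: the set of good elements is a closed ℂ-submodule
  set S : Submodule ℂ A :=
    { carrier := {a : A | ∀ x : X, T (ρX.act x a) = ρY.act (T x) a}
      add_mem' := by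
        intro a b ha hb x
        rw [map_add, map_add, ha x, hb x, map_add]
      zero_mem' := by intro x; simp
      smul_mem' := by
        intro c a ha x
        rw [map_smul, map_smul, map_smul, ha x] } with hSdef
  have hSclosed : IsClosed (S : Set A) := by
    have : (S : Set A) = ⋂ x : X, {a : A | T (ρX.act x a) = ρY.act (T x) a} := by
      ext a; simp [hSdef, Set.mem_iInter]
    rw [this]
    exact isClosed_iInter fun x =>
      isClosed_eq (T.continuous.comp (ρX.act x).continuous) (ρY.act (T x)).continuous
  have hspan : Submodule.span ℂ {e : A | IsProjection e} ≤ S :=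
    Submodule.span_le.mpr fun e he => keyP e he
  have hsa : ∀ a : A, IsSelfAdjoint a → a ∈ S := by
    intro a ha
    have hsub : {b : A | IsSelfAdjoint b ∧ (spectrum ℂ b).Finite} ⊆ (S : Set A) :=
      fun b hb => hspan (fin_spec_mem_span_proj hb.1 hb.2)
    exact hSclosed.closure_subset_iff.mpr hsub (hRR0 a ha)
  -- Step 4: decompose arbitrary elements into self-adjoint parts
  have hall : ∀ a : A, a ∈ S := by
    intro a
    have hdecomp : a = (↑(realPart a) : A) + Complex.I • (↑(imaginaryPart a) : A) :=
      (realPart_add_I_smul_imaginaryPart a).symm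
    rw [hdecomp]
    exact S.add_mem (hsa _ (realPart a).2) (S.smul_mem _ (hsa _ (imaginaryPart a).2))
  intro x a
  exact hall a x
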